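/- Suppose every load bus k ∈ L is connected to some source bus by a path Π_k of lines whose total resistance is at most R_max, and suppose p_Σ < V0²/(4·R_max). Let v be a voltage profile with v_k > V0/2 for every load bus k. Then for every vector w : V → ℝ with w_k = 0 for all sources k ∈ S and w ≠ 0, the Hessian quadratic form of G is strictly positive: Σ_{α∈E} (w_{α₁} − w_{α₂})²/R_α − Σ_{k∈L} (p_k/v_k²)·w_k² > 0. Consequently G is strictly convex on the domain of load-voltage profiles with v_k > V0/2. -/

import Mathlib

open Finset

/-- Full voltage profile on buses `S ⊕ L`: every source bus is held at `V0`,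
load bus `k` is at `vL k`. -/
def fullV {S L : Type*} (V0 : ℝ) (vL : L → ℝ) : S ⊕ L → ℝ :=
  Sum.elim (fun _ => V0) vL

/-- Resistive co-content
`G(v) = Σ_α (v_{α₁} - v_{α₂})²/(2 R_α) + Σ_k p_k log v_k`. -/
noncomputable def cocontent {S L E : Type*} [Fintype L] [Fintype E]
    (e1 e2 : E → S ⊕ L) (R : E → ℝ) (p : L → ℝ) (V0 : ℝ) (vL : L → ℝ) : ℝ :=
  (∑ α, (fullV (S := S) V0 vL (e1 α) - fullV (S := S) V0 vL (e2 α)) ^ 2 / (2 * R α))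
    + ∑ k, p k * Real.log (vL k)

/-- There is a path of lines (each traversed in either direction) joining the
load bus `k` to some source bus, whose total resistance is at most `Rmax`. -/
def pathToSource {S L E : Type*} [Fintype E]
    (e1 e2 : E → S ⊕ L) (R : E → ℝ) (Rmax : ℝ) (k : L) : Prop :=
  ∃ (n : ℕ) (b : Fin (n + 1) → S ⊕ L) (ed : Fin n → E),
    b 0 = Sum.inr k ∧ (∃ s : S, b (Fin.last n) = Sum.inl s) ∧
    (∀ i : Fin n,
      (e1 (ed i) = b i.castSucc ∧ e2 (ed i) = b i.succ) ∨
      (e1 (ed i) = b i.succ ∧ e2 (ed i) = b i.castSucc)) ∧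
    (∑ i, R (ed i)) ≤ Rmax

/-- `vL` is a critical point of the co-content `G` with respect to the load
voltages: all load voltages are positive and `∂G/∂v_k = 0` for every load `k`. -/
noncomputable def isCritPt {S L E : Type*} [Fintype E] [Fintype L]
    [DecidableEq S] [DecidableEq L]
    (e1 e2 : E → S ⊕ L) (R : E → ℝ) (p : L → ℝ) (V0 : ℝ) (vL : L → ℝ) : Prop :=
  (∀ k, 0 < vL k) ∧
  ∀ k : L,
    (∑ α, ((if e1 α = Sum.inr k then (1 : ℝ) else 0)
        - (if e2 α = Sum.inr k then 1 else 0))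
      * (fullV (S := S) V0 vL (e1 α) - fullV (S := S) V0 vL (e2 α)) / R α)
    + p k / vL k = 0

/-- High-voltage solution of `v (V0 - v) = R p`. -/
noncomputable def Vhigh (V0 R p : ℝ) : ℝ :=
  V0 / 2 * (1 + Real.sqrt (1 - p / (V0 ^ 2 / (4 * R))))

/-- Low-voltage solution of `v (V0 - v) = R p`. -/
noncomputable def Vlow (V0 R p : ℝ) : ℝ :=
  V0 / 2 * (1 - Real.sqrt (1 - p / (V0 ^ 2 / (4 * R))))

/-- Line-current derivative expressed through the state:
`di_α/dt = (-R_α i_α + v_{α₁} - v_{α₂}) / L_α`. -/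
noncomputable def idotF {S L E : Type*} (e1 e2 : E → S ⊕ L) (R Lind : E → ℝ)
    (V0 : ℝ) (i : E → ℝ) (vL : L → ℝ) (α : E) : ℝ :=
  (-R α * i α + fullV (S := S) V0 vL (e1 α) - fullV (S := S) V0 vL (e2 α)) / Lind α

/-- Load-voltage derivative expressed through the state:
`dv_k/dt = (-p_k/v_k - (net current leaving bus k)) / C_k`. -/
noncomputable def vdotF {S L E : Type*} [Fintype E] [DecidableEq S] [DecidableEq L]
    (e1 e2 : E → S ⊕ L) (C p : L → ℝ) (i : E → ℝ) (vL : L → ℝ) (k : L) : ℝ :=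
  (-(p k / vL k)
    - ∑ α, ((if e1 α = Sum.inr k then (1 : ℝ) else 0)
        - (if e2 α = Sum.inr k then 1 else 0)) * i α) / C k

/-- Brayton–Moser potential
`P(x) = G(v) + Σ_α ((τmax - τ_α)/2) L_α (di_α/dt)² + (τmax/2) Σ_k C_k (dv_k/dt)²`,
with the time derivatives expressed through the state via the dynamics. -/
noncomputable def BMpot {S L E : Type*} [Fintype L] [Fintype E]
    [DecidableEq S] [DecidableEq L]
    (e1 e2 : E → S ⊕ L) (R Lind : E → ℝ) (C p : L → ℝ) (V0 τmax : ℝ)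
    (i : E → ℝ) (vL : L → ℝ) : ℝ :=
  cocontent e1 e2 R p V0 vL
    + (∑ α, (τmax - Lind α / R α) / 2 * Lind α * (idotF e1 e2 R Lind V0 i vL α) ^ 2)
    + τmax / 2 * ∑ k, C k * (vdotF e1 e2 C p i vL k) ^ 2


lemma gConvex (m : ℝ) (hm : 0 < m) :
    ConvexOn ℝ (Set.Ici m) (fun t => Real.log t + t ^ 2 / (2 * m ^ 2)) := by
  set f : ℝ → ℝ := fun t => Real.log t + t ^ 2 / (2 * m ^ 2) with hfdef
  have hderiv : ∀ x ∈ Set.Ioi m, HasDerivAt f (x⁻¹ + x / m ^ 2) x := by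
    intro x hx
    have hx0 : x ≠ 0 := ne_of_gt (hm.trans hx)
    have h1 := Real.hasDerivAt_log hx0
    have h2 : HasDerivAt (fun t : ℝ => t ^ 2 / (2 * m ^ 2)) (x / m ^ 2) x := by
      have h := (hasDerivAt_pow 2 x).div_const (2 * m ^ 2)
      refine h.congr_deriv ?_
      have : m ^ 2 ≠ 0 := by positivity
      field_simp
      ring
    exact h1.add h2
  have hdf : Set.EqOn (deriv f) (fun x => x⁻¹ + x / m ^ 2) (Set.Ioi m) :=
    fun x hx => (hderiv x hx).deriv
  apply convexOn_of_deriv2_nonneg (convex_Ici m)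
  · intro x hx
    have hx0 : x ≠ 0 := ne_of_gt (hm.trans_le hx)
    exact ((Real.continuousAt_log hx0).add
      (((continuous_pow 2).div_const _).continuousAt)).continuousWithinAt
  · rw [interior_Ici]
    exact fun x hx => (hderiv x hx).differentiableAt.differentiableWithinAt
  · rw [interior_Ici]
    intro x hx
    have hne : deriv f =ᶠ[nhds x] fun y => y⁻¹ + y / m ^ 2 :=
      Filter.eventuallyEq_of_mem (isOpen_Ioi.mem_nhds hx) hdf
    have hx0 : x ≠ 0 := ne_of_gt (hm.trans hx)
    have hdiff : DifferentiableAt ℝ (fun y : ℝ => y⁻¹ + y / m ^ 2) x :=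
      ((hasDerivAt_inv hx0).add ((hasDerivAt_id x).div_const (m ^ 2))).differentiableAt
    exact (hne.differentiableAt_iff.mpr hdiff).differentiableWithinAt
  · rw [interior_Ici]
    intro x hx
    have hne : deriv f =ᶠ[nhds x] fun y => y⁻¹ + y / m ^ 2 :=
      Filter.eventuallyEq_of_mem (isOpen_Ioi.mem_nhds hx) hdf
    have hx0 : x ≠ 0 := ne_of_gt (hm.trans hx)
    have h2 : deriv (fun y : ℝ => y⁻¹ + y / m ^ 2) x = -(x ^ 2)⁻¹ + 1 / m ^ 2 := by
      have := (hasDerivAt_inv hx0).add ((hasDerivAt_id x).div_const (m ^ 2))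
      exact this.deriv
    have hit : deriv^[2] f x = deriv (deriv f) x := rfl
    rw [hit, hne.deriv_eq, h2]
    have hxm : m ^ 2 ≤ x ^ 2 := by nlinarith [(Set.mem_Ioi.mp hx).le, hm.le]
    have : (x ^ 2)⁻¹ ≤ (m ^ 2)⁻¹ := by
      apply inv_anti₀ (by positivity) hxm
    rw [one_div]
    linarith

lemma logIneq (m a b θ σ : ℝ) (hm : 0 < m) (ha : m ≤ a) (hb : m ≤ b)
    (hθ : 0 < θ) (hσ : 0 < σ) (hs : θ + σ = 1) :
    Real.log (θ * a + σ * b) ≤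
      θ * Real.log a + σ * Real.log b + θ * σ * (a - b) ^ 2 / (2 * m ^ 2) := by
  have hg := (gConvex m hm).2 ha hb hθ.le hσ.le hs
  simp only [smul_eq_mul] at hg
  have hK : (0:ℝ) < 2 * m ^ 2 := by positivity
  have key : θ * σ * (a - b) ^ 2 = θ * a ^ 2 + σ * b ^ 2 - (θ * a + σ * b) ^ 2 := by
    have : σ = 1 - θ := by linarith
    subst this; ring
  have e1 : θ * σ * (a - b) ^ 2 / (2 * m ^ 2)
      = θ * (a ^ 2 / (2 * m ^ 2)) + σ * (b ^ 2 / (2 * m ^ 2))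
        - (θ * a + σ * b) ^ 2 / (2 * m ^ 2) := by
    rw [key]; ring
  rw [e1]
  linarith [hg]



lemma pathBoundNat {S L E : Type*} [Fintype E]
    (e1 e2 : E → S ⊕ L) (R : E → ℝ) (hR : ∀ α, 0 < R α) (w : S ⊕ L → ℝ) :
    ∀ n : ℕ, ∀ b : ℕ → S ⊕ L, ∀ ed : ℕ → E,
      (∀ i, i < n →
        (e1 (ed i) = b i ∧ e2 (ed i) = b (i + 1)) ∨
        (e1 (ed i) = b (i + 1) ∧ e2 (ed i) = b i)) →
      w (b n) = 0 →
      (w (b 0)) ^ 2 ≤ (∑ i ∈ Finset.range n, R (ed i)) *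
        ∑ α, (w (e1 α) - w (e2 α)) ^ 2 / R α := by
  intro n
  induction n using Nat.strong_induction_on with
  | _ n IH =>
  intro b ed hed hlast
  classical
  have hQ0 : 0 ≤ ∑ α, (w (e1 α) - w (e2 α)) ^ 2 / R α :=
    Finset.sum_nonneg fun α _ => div_nonneg (sq_nonneg _) (hR α).le
  rcases Nat.eq_zero_or_pos n with hn0 | hnpos
  · subst hn0; simp [hlast]
  by_cases hrep : ∃ p q, p < q ∧ q ≤ n ∧ b p = b q
  · -- splice out a cycle and use the induction hypothesis
    obtain ⟨pp, q, hpq, hqn, hbpq⟩ := hrep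
    set d := q - pp with hd
    set m := n - d with hm
    have hd1 : 1 ≤ d := by omega
    have hmn : m < n := by omega
    have hpm : pp ≤ m := by omega
    set φ : ℕ → ℕ := fun j => if j < pp then j else j + d with hφ
    set ψ : ℕ → ℕ := fun j => if j ≤ pp then j else j + d with hψ
    have hbψ : ∀ j, pp ≤ j → b (ψ j) = b (j + d) := by
      intro j hj
      by_cases h : j ≤ pp
      · have hj' : j = pp := le_antisymm h hj
        subst hj'
        simp only [ψ, if_pos le_rfl]
        rw [show j + d = q from by omega] at *
        exact hbpq
      · simp only [ψ, if_neg h]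
    have hed' : ∀ i, i < m →
        (e1 (ed (φ i)) = b (ψ i) ∧ e2 (ed (φ i)) = b (ψ (i + 1))) ∨
        (e1 (ed (φ i)) = b (ψ (i + 1)) ∧ e2 (ed (φ i)) = b (ψ i)) := by
      intro i him
      by_cases hip : i < pp
      · have h1 : φ i = i := if_pos hip
        have h2 : ψ i = i := if_pos hip.le
        have h3 : ψ (i + 1) = i + 1 := if_pos (by omega)
        rw [h1, h2, h3]
        exact hed i (by omega)
      · have h1 : φ i = i + d := if_neg hip
        have h3 : ψ (i + 1) = i + 1 + d := if_neg (by omega)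
        have h2 : b (ψ i) = b (i + d) := hbψ i (by omega)
        rw [h1, h3, h2, show i + 1 + d = i + d + 1 from by omega]
        exact hed (i + d) (by omega)
    have hlast' : w (b (ψ m)) = 0 := by
      have : b (ψ m) = b n := by
        by_cases h : m ≤ pp
        · have h1 : m = pp := le_antisymm h hpm
          have h2 : q = n := by omega
          simp only [ψ, if_pos h]
          rw [h1, hbpq, h2]
        · simp only [ψ, if_neg h]
          congr 1
          omega
      rw [this]; exact hlast
    have hb0 : b (ψ 0) = b 0 := by simp [ψ]
    have hIH := IH m hmn (fun j => b (ψ j)) (fun j => ed (φ j)) hed' hlast'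
    rw [hb0] at hIH
    refine hIH.trans (mul_le_mul_of_nonneg_right ?_ hQ0)
    -- sum over spliced path ≤ sum over original path
    have hinj : ∀ i1 ∈ Finset.range m, ∀ i2 ∈ Finset.range m, φ i1 = φ i2 → i1 = i2 := by
      intro i1 _ i2 _ h
      simp only [φ] at h
      split_ifs at h <;> omega
    rw [show (∑ i ∈ Finset.range m, R (ed (φ i)))
        = ∑ j ∈ (Finset.range m).image φ, R (ed j) from (Finset.sum_image (f := fun j => R (ed j)) hinj).symm]
    apply Finset.sum_le_sum_of_subset_of_nonneg
    · intro j hj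
      simp only [Finset.mem_image, Finset.mem_range] at hj ⊢
      obtain ⟨i, hi, rfl⟩ := hj
      simp only [φ]
      split_ifs <;> omega
    · intro j _ _; exact (hR _).le
  · -- no repeated bus: edges along the path are distinct; Cauchy–Schwarz
    push_neg at hrep
    have hbinj : ∀ u v, u ≤ n → v ≤ n → b u = b v → u = v := by
      intro u v hu hv h
      by_contra hne
      rcases Nat.lt_or_ge u v with hlt | hge
      · exact hrep u v hlt hv h
      · exact hrep v u (by omega) hu h.symm
    have hedinj : ∀ i1 ∈ Finset.range n, ∀ i2 ∈ Finset.range n, ed i1 = ed i2 → i1 = i2 := by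
      intro i hi j hj h
      simp only [Finset.mem_range] at hi hj
      rcases hed i hi with ⟨hi1, hi2⟩ | ⟨hi1, hi2⟩ <;>
        rcases hed j hj with ⟨hj1, hj2⟩ | ⟨hj1, hj2⟩
      · exact hbinj i j (by omega) (by omega) (by rw [← hi1, h, hj1])
      · have e1eq : i = j + 1 := hbinj i (j+1) (by omega) (by omega) (by rw [← hi1, h, hj1])
        have e2eq : i + 1 = j := hbinj (i+1) j (by omega) (by omega) (by rw [← hi2, h, hj2])
        omega
      · have e1eq : i + 1 = j := hbinj (i+1) j (by omega) (by omega) (by rw [← hi1, h, hj1])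
        have e2eq : i = j + 1 := hbinj i (j+1) (by omega) (by omega) (by rw [← hi2, h, hj2])
        omega
      · exact hbinj i j (by omega) (by omega) (by rw [← hi2, h, hj2])
    set c : ℕ → ℝ := fun i => w (b i) - w (b (i + 1)) with hc
    have htele : w (b 0) = ∑ i ∈ Finset.range n, c i := by
      have := Finset.sum_range_sub' (fun i => w (b i)) n
      simp only [c]
      rw [this, hlast, sub_zero]
    have hc2 : ∀ i, i < n → c i ^ 2 = (w (e1 (ed i)) - w (e2 (ed i))) ^ 2 := by
      intro i hi
      rcases hed i hi with ⟨h1, h2⟩ | ⟨h1, h2⟩ <;> rw [h1, h2] <;> ring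
    have hRpos : 0 < ∑ i ∈ Finset.range n, R (ed i) :=
      Finset.sum_pos (fun i _ => hR _) (by simp [hnpos.ne'])
    have hcs : (∑ i ∈ Finset.range n, c i) ^ 2
        ≤ (∑ i ∈ Finset.range n, R (ed i)) * ∑ i ∈ Finset.range n, c i ^ 2 / R (ed i) := by
      have h := sq_sum_div_le_sum_sq_div (Finset.range n) c
        (g := fun i => R (ed i)) (fun i _ => hR _)
      rw [div_le_iff₀ hRpos] at h
      linarith [h]
    have hle : ∑ i ∈ Finset.range n, c i ^ 2 / R (ed i)
        ≤ ∑ α, (w (e1 α) - w (e2 α)) ^ 2 / R α := by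
      have he : ∑ i ∈ Finset.range n, c i ^ 2 / R (ed i)
          = ∑ j ∈ (Finset.range n).image ed, (w (e1 j) - w (e2 j)) ^ 2 / R j := by
        rw [Finset.sum_image hedinj]
        exact Finset.sum_congr rfl fun i hi => by
          rw [hc2 i (Finset.mem_range.mp hi)]
      rw [he]
      apply Finset.sum_le_sum_of_subset_of_nonneg (Finset.subset_univ _)
      intro j _ _
      exact div_nonneg (sq_nonneg _) (hR j).le
    calc (w (b 0)) ^ 2 = (∑ i ∈ Finset.range n, c i) ^ 2 := by rw [htele]
      _ ≤ (∑ i ∈ Finset.range n, R (ed i)) * ∑ i ∈ Finset.range n, c i ^ 2 / R (ed i) := hcs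
      _ ≤ (∑ i ∈ Finset.range n, R (ed i)) * ∑ α, (w (e1 α) - w (e2 α)) ^ 2 / R α :=
          mul_le_mul_of_nonneg_left hle hRpos.le

lemma pathBound {S L E : Type*} [Fintype E]
    (e1 e2 : E → S ⊕ L) (R : E → ℝ) (hR : ∀ α, 0 < R α)
    (Rmax : ℝ) (k : L) (hpath : pathToSource e1 e2 R Rmax k)
    (w : S ⊕ L → ℝ) (hw : ∀ s : S, w (Sum.inl s) = 0) :
    (w (Sum.inr k)) ^ 2 ≤ Rmax * ∑ α, (w (e1 α) - w (e2 α)) ^ 2 / R α := by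
  have hQ0 : 0 ≤ ∑ α, (w (e1 α) - w (e2 α)) ^ 2 / R α :=
    Finset.sum_nonneg fun α _ => div_nonneg (sq_nonneg _) (hR α).le
  obtain ⟨n, b, ed, hb0, ⟨s, hbl⟩, hed, hsum⟩ := hpath
  cases n with
  | zero =>
      rw [show (Fin.last 0) = 0 from rfl, hb0] at hbl
      exact absurd hbl (by simp)
  | succ nn =>
      set bN : ℕ → S ⊕ L := fun j => b ⟨min j (nn+1), by omega⟩ with hbN
      set edN : ℕ → E := fun j => ed ⟨min j nn, by omega⟩ with hedN
      have hcond : ∀ i, i < nn + 1 →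
          (e1 (edN i) = bN i ∧ e2 (edN i) = bN (i + 1)) ∨
          (e1 (edN i) = bN (i + 1) ∧ e2 (edN i) = bN i) := by
        intro i hi
        have he : edN i = ed ⟨i, hi⟩ := congrArg ed (Fin.ext (by simp; omega))
        have h1 : bN i = b (Fin.castSucc ⟨i, hi⟩) := congrArg b (Fin.ext (by simp; omega))
        have h2 : bN (i + 1) = b (Fin.succ ⟨i, hi⟩) := congrArg b (Fin.ext (by simp; omega))
        rw [he, h1, h2]
        exact hed ⟨i, hi⟩
      have hlastN : w (bN (nn + 1)) = 0 := by
        have : bN (nn + 1) = b (Fin.last (nn + 1)) := congrArg b (Fin.ext (by simp))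
        rw [this, hbl]
        exact hw s
      have key := pathBoundNat e1 e2 R hR w (nn + 1) bN edN hcond hlastN
      have hsumeq : (∑ i ∈ Finset.range (nn + 1), R (edN i)) = ∑ i, R (ed i) := by
        rw [← Fin.sum_univ_eq_sum_range (fun j => R (edN j)) (nn + 1)]
        refine Finset.sum_congr rfl fun i _ => ?_
        exact congrArg R (congrArg ed (Fin.ext (by simp; omega)))
      have hb0N : bN 0 = Sum.inr k := by
        rw [show bN 0 = b 0 from congrArg b (Fin.ext (by simp)), hb0]
      rw [hb0N, hsumeq] at key
      exact key.trans (mul_le_mul_of_nonneg_right hsum hQ0)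


/-- If every load bus is connected to some source by a path of lines of total
resistance at most `Rmax`, and `p_Σ < V0²/(4 Rmax)`, then at every voltage
profile with all load voltages above `V0/2`, the Hessian quadratic form of the
co-content `G` is strictly positive on every nonzero direction `w` vanishing
at the sources; consequently `G` is strictly convex on
`{vL | ∀ k, vL k > V0/2}`. -/
theorem stmt_5 {S L E : Type*} [Fintype S] [Fintype L] [Fintype E]
    (e1 e2 : E → S ⊕ L) (R : E → ℝ) (hR : ∀ α, 0 < R α)
    (V0 Rmax : ℝ) (hV0 : 0 < V0)
    (p : L → ℝ) (hp : ∀ k, 0 ≤ p k)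
    (hpath : ∀ k : L, pathToSource e1 e2 R Rmax k)
    (hpSum : (∑ k, p k) < V0 ^ 2 / (4 * Rmax)) :
    (∀ vL : L → ℝ, (∀ k, V0 / 2 < vL k) →
      ∀ w : S ⊕ L → ℝ, (∀ s : S, w (Sum.inl s) = 0) → w ≠ 0 →
        0 < (∑ α, (w (e1 α) - w (e2 α)) ^ 2 / R α)
            - ∑ k, p k / (vL k) ^ 2 * (w (Sum.inr k)) ^ 2) ∧
    StrictConvexOn ℝ {vL : L → ℝ | ∀ k, V0 / 2 < vL k}
      (cocontent e1 e2 R p V0) := by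
  have hpS : 0 ≤ ∑ k, p k := Finset.sum_nonneg fun k _ => hp k
  have hRmax : 0 < Rmax := by
    by_contra h
    push_neg at h
    have h4 : 4 * Rmax ≤ 0 := by linarith
    have h1 : V0 ^ 2 / (4 * Rmax) ≤ 0 := by
      rcases lt_or_eq_of_le h4 with h' | h'
      · exact (div_neg_of_pos_of_neg (by positivity) h').le
      · rw [h', div_zero]
    linarith
  -- the core strict inequality
  have core : ∀ w : S ⊕ L → ℝ, (∀ s : S, w (Sum.inl s) = 0) → w ≠ 0 →
      4 / V0 ^ 2 * ∑ k, p k * (w (Sum.inr k)) ^ 2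
        < ∑ α, (w (e1 α) - w (e2 α)) ^ 2 / R α := by
    intro w hw hwne
    set Q := ∑ α, (w (e1 α) - w (e2 α)) ^ 2 / R α with hQdef
    have hQ0 : 0 ≤ Q := Finset.sum_nonneg fun α _ => div_nonneg (sq_nonneg _) (hR α).le
    have hbk : ∀ k, (w (Sum.inr k)) ^ 2 ≤ Rmax * Q :=
      fun k => pathBound e1 e2 R hR Rmax k (hpath k) w hw
    have hQpos : 0 < Q := by
      rcases hQ0.lt_or_eq with h | h
      · exact h
      · exfalso
        apply hwne
        funext u
        cases u with
        | inl s => exact hw s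
        | inr k =>
            have := hbk k
            rw [← h, mul_zero] at this
            have h0 : (w (Sum.inr k)) ^ 2 = 0 := le_antisymm this (sq_nonneg _)
            exact pow_eq_zero_iff (n := 2) (by norm_num) |>.mp h0
    have hsum1 : ∑ k, p k * (w (Sum.inr k)) ^ 2 ≤ (∑ k, p k) * (Rmax * Q) := by
      rw [Finset.sum_mul]
      exact Finset.sum_le_sum fun k _ => mul_le_mul_of_nonneg_left (hbk k) (hp k)
    have hstrict : (∑ k, p k) * (Rmax * Q) < (V0 ^ 2 / (4 * Rmax)) * (Rmax * Q) :=
      mul_lt_mul_of_pos_right hpSum (by positivity)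
    have heq : 4 / V0 ^ 2 * ((V0 ^ 2 / (4 * Rmax)) * (Rmax * Q)) = Q := by
      field_simp
    calc 4 / V0 ^ 2 * ∑ k, p k * (w (Sum.inr k)) ^ 2
        ≤ 4 / V0 ^ 2 * ((∑ k, p k) * (Rmax * Q)) :=
          mul_le_mul_of_nonneg_left hsum1 (by positivity)
      _ < 4 / V0 ^ 2 * ((V0 ^ 2 / (4 * Rmax)) * (Rmax * Q)) :=
          mul_lt_mul_of_pos_left hstrict (by positivity)
      _ = Q := heq
  constructor
  · -- Part 1
    intro vL hvL w hw hwne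
    have hcore := core w hw hwne
    have hterm : ∀ k : L, p k / (vL k) ^ 2 * (w (Sum.inr k)) ^ 2
        ≤ 4 / V0 ^ 2 * (p k * (w (Sum.inr k)) ^ 2) := by
      intro k
      have hvk : V0 / 2 < vL k := hvL k
      have hv2 : V0 ^ 2 / 4 ≤ (vL k) ^ 2 := by nlinarith
      have h1 : p k / (vL k) ^ 2 ≤ p k / (V0 ^ 2 / 4) :=
        div_le_div_of_nonneg_left (hp k) (by positivity) hv2
      have h2 : p k / (V0 ^ 2 / 4) = 4 / V0 ^ 2 * p k := by
        field_simp
      calc p k / (vL k) ^ 2 * (w (Sum.inr k)) ^ 2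
          ≤ p k / (V0 ^ 2 / 4) * (w (Sum.inr k)) ^ 2 :=
            mul_le_mul_of_nonneg_right h1 (sq_nonneg _)
        _ = 4 / V0 ^ 2 * (p k * (w (Sum.inr k)) ^ 2) := by rw [h2]; ring
    have hsum2 : ∑ k, p k / (vL k) ^ 2 * (w (Sum.inr k)) ^ 2
        ≤ 4 / V0 ^ 2 * ∑ k, p k * (w (Sum.inr k)) ^ 2 := by
      rw [Finset.mul_sum]
      exact Finset.sum_le_sum fun k _ => hterm k
    linarith
  · -- Part 2: strict convexity
    constructor
    · -- convexity of the domain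
      intro x hx y hy a b ha hb hab
      intro k
      simp only [Pi.add_apply, Pi.smul_apply, smul_eq_mul]
      have hxk := hx k
      have hyk := hy k
      rcases ha.lt_or_eq with ha' | ha'
      · nlinarith [mul_nonneg hb (sub_nonneg.mpr hyk.le)]
      · have hb1 : b = 1 := by linarith
        rw [← ha', hb1]
        simpa using hyk
    · intro x hx y hy hxy a b ha hb hab
      simp only [Set.mem_setOf_eq] at hx hy
      set w : S ⊕ L → ℝ := Sum.elim (fun _ => 0) (fun k => x k - y k) with hwdef
      have hw : ∀ s : S, w (Sum.inl s) = 0 := fun s => rfl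
      have hwne : w ≠ 0 := by
        obtain ⟨k, hk⟩ := Function.ne_iff.mp hxy
        intro h
        apply hk
        have := congrFun h (Sum.inr k)
        simpa [w, sub_eq_zero] using this
      have hcore := core w hw hwne
      set Q := ∑ α, (w (e1 α) - w (e2 α)) ^ 2 / R α with hQdef
      have hab2 : (0:ℝ) < a * b / 2 := by positivity
      -- full voltage at the combination
      have hfull : ∀ u, fullV (S := S) V0 (a • x + b • y) u
          = a * fullV (S := S) V0 x u + b * fullV (S := S) V0 y u := by
        intro u
        cases u with
        | inl s =>
            simp only [fullV, Sum.elim_inl]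
            rw [← add_mul, hab, one_mul]
        | inr k => simp [fullV]
      have hwu : ∀ u, fullV (S := S) V0 x u - fullV (S := S) V0 y u = w u := by
        intro u
        cases u with
        | inl s => simp [fullV, w]
        | inr k => simp [fullV, w]
      have hquad : ∑ α, (fullV (S := S) V0 (a • x + b • y) (e1 α)
              - fullV (S := S) V0 (a • x + b • y) (e2 α)) ^ 2 / (2 * R α)
          = a * ∑ α, (fullV (S := S) V0 x (e1 α) - fullV (S := S) V0 x (e2 α)) ^ 2 / (2 * R α)
            + b * ∑ α, (fullV (S := S) V0 y (e1 α) - fullV (S := S) V0 y (e2 α)) ^ 2 / (2 * R α)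
            - a * b / 2 * Q := by
        rw [hQdef, Finset.mul_sum, Finset.mul_sum, Finset.mul_sum,
          ← Finset.sum_add_distrib, ← Finset.sum_sub_distrib]
        refine Finset.sum_congr rfl fun α _ => ?_
        have hRα : R α ≠ 0 := (hR α).ne'
        rw [hfull (e1 α), hfull (e2 α)]
        have h3 : a * fullV (S := S) V0 x (e1 α) + b * fullV (S := S) V0 y (e1 α)
            - (a * fullV (S := S) V0 x (e2 α) + b * fullV (S := S) V0 y (e2 α))
            = a * (fullV (S := S) V0 x (e1 α) - fullV (S := S) V0 x (e2 α))
              + b * (fullV (S := S) V0 y (e1 α) - fullV (S := S) V0 y (e2 α)) := by ring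
        have h4 : w (e1 α) - w (e2 α)
            = (fullV (S := S) V0 x (e1 α) - fullV (S := S) V0 x (e2 α))
              - (fullV (S := S) V0 y (e1 α) - fullV (S := S) V0 y (e2 α)) := by
          rw [← hwu (e1 α), ← hwu (e2 α)]; ring
        rw [h3, h4]
        have hb' : b = 1 - a := by linarith
        subst hb'
        field_simp
        ring
      have hlog : ∑ k, p k * Real.log ((a • x + b • y) k)
          ≤ a * ∑ k, p k * Real.log (x k) + b * ∑ k, p k * Real.log (y k)
            + a * b / 2 * (4 / V0 ^ 2 * ∑ k, p k * (w (Sum.inr k)) ^ 2) := by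
        rw [Finset.mul_sum, Finset.mul_sum, Finset.mul_sum, Finset.mul_sum,
          ← Finset.sum_add_distrib, ← Finset.sum_add_distrib]
        refine Finset.sum_le_sum fun k _ => ?_
        have h0 := logIneq (V0 / 2) (x k) (y k) a b (by positivity) (hx k).le (hy k).le ha hb hab
        have h1 := mul_le_mul_of_nonneg_left h0 (hp k)
        have h2 : (a • x + b • y) k = a * x k + b * y k := by
          simp [Pi.add_apply, Pi.smul_apply, smul_eq_mul]
        have h3 : w (Sum.inr k) = x k - y k := rfl
        calc p k * Real.log ((a • x + b • y) k)
            = p k * Real.log (a * x k + b * y k) := by rw [h2]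
          _ ≤ p k * (a * Real.log (x k) + b * Real.log (y k)
                + a * b * (x k - y k) ^ 2 / (2 * (V0 / 2) ^ 2)) := h1
          _ = a * (p k * Real.log (x k)) + b * (p k * Real.log (y k))
                + a * b / 2 * (4 / V0 ^ 2 * (p k * (w (Sum.inr k)) ^ 2)) := by
              rw [h3]
              field_simp
              ring
      have hfinal : a * b / 2 * (4 / V0 ^ 2 * ∑ k, p k * (w (Sum.inr k)) ^ 2)
          < a * b / 2 * Q := mul_lt_mul_of_pos_left hcore hab2
      show cocontent e1 e2 R p V0 (a • x + b • y)
          < a • cocontent e1 e2 R p V0 x + b • cocontent e1 e2 R p V0 y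
      simp only [smul_eq_mul, cocontent]
      rw [hquad]
      rw [mul_add, mul_add]
      linarith
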